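/- Let σ be an anisotropy on ℝⁿ with Wulff shape W = {x ∈ ℝⁿ : x·p ≤ σ(p) for all p ∈ ℝⁿ}, let λ > 0, and let d, b ∈ ℝⁿ. If b is the point of (1/λ)W closest to d + b in the Euclidean norm (i.e. b ∈ (1/λ)W and ‖(d+b) − b‖ ≤ ‖(d+b) − y‖ for all y ∈ (1/λ)W), then λb ∈ ∂σ(d); that is, σ(d + h) − σ(d) ≥ (λb)·h for all h ∈ ℝⁿ. Moreover, if d ≠ 0 then λb lies on the boundary of W. -/

import Mathlib

open Pointwise RealInnerProductSpace

lemma support_dual_aux (n : ℕ) (σ : EuclideanSpace ℝ (Fin n) → ℝ)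
    (hconv : ConvexOn ℝ Set.univ σ)
    (hhom : ∀ c : ℝ, 0 ≤ c → ∀ p, σ (c • p) = c * σ p)
    (d : EuclideanSpace ℝ (Fin n)) (m : ℝ)
    (hub : ∀ w : EuclideanSpace ℝ (Fin n),
      (∀ p, (∑ i, w i * p i) ≤ σ p) → (∑ i, d i * w i) ≤ m) :
    σ d ≤ m := by
  by_contra hlt
  push_neg at hlt
  have hσ0 : σ 0 = 0 := by simpa using hhom 0 le_rfl 0
  have hcont : Continuous σ := by
    rw [← continuousOn_univ]
    exact hconv.continuousOn isOpen_univ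
  set E : Set (EuclideanSpace ℝ (Fin n) × ℝ) := {q | σ q.1 ≤ q.2} with hE
  have hEconv : Convex ℝ E := by
    intro q hq r hr a b' ha hb' hab
    simp only [hE, Set.mem_setOf_eq] at hq hr ⊢
    calc σ (a • q.1 + b' • r.1) ≤ a * σ q.1 + b' * σ r.1 :=
          hconv.2 (Set.mem_univ _) (Set.mem_univ _) ha hb' hab
      _ ≤ a * q.2 + b' * r.2 := by
          gcongr
      _ = (a • q + b' • r).2 := rfl
  have hEclosed : IsClosed E :=
    isClosed_le (hcont.comp continuous_fst) continuous_snd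
  have hdm : ((d, m) : EuclideanSpace ℝ (Fin n) × ℝ) ∉ E := by
    simp only [hE, Set.mem_setOf_eq]
    exact not_le.mpr hlt
  obtain ⟨f, u, hfu, hfE⟩ := geometric_hahn_banach_point_closed hEconv hEclosed hdm
  set s : ℝ := f (0, 1) with hs_def
  set y : EuclideanSpace ℝ (Fin n) := WithLp.toLp 2 (fun i => f (EuclideanSpace.single i 1, 0)) with hy_def
  have hbasis : ∀ x : EuclideanSpace ℝ (Fin n),
      x = ∑ i, x i • EuclideanSpace.single i (1:ℝ) := by
    intro x
    have h := (EuclideanSpace.basisFun (Fin n) ℝ).toBasis.sum_repr x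
    simp only [OrthonormalBasis.coe_toBasis_repr_apply, OrthonormalBasis.repr_apply_apply,
      OrthonormalBasis.coe_toBasis, EuclideanSpace.basisFun_apply,
      EuclideanSpace.inner_single_left, map_one, one_mul] at h
    exact h.symm
  have hrep : ∀ (x : EuclideanSpace ℝ (Fin n)) (t : ℝ),
      f (x, t) = (∑ i, x i * y i) + t * s := by
    intro x t
    have h1 : ((x, t) : EuclideanSpace ℝ (Fin n) × ℝ)
        = (∑ i, x i • ((EuclideanSpace.single i 1, 0) : EuclideanSpace ℝ (Fin n) × ℝ))
          + t • ((0, 1) : EuclideanSpace ℝ (Fin n) × ℝ) := by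
      apply Prod.ext
      · simp only [Prod.fst_add, Prod.fst_sum, Prod.smul_fst, Prod.snd_add]
        simp only [smul_zero, add_zero]
        exact hbasis x
      · simp [Prod.snd_sum]
    rw [h1, map_add, map_sum, map_smul]
    simp only [map_smul, smul_eq_mul]
    rfl
  have h00 : ((0, 0) : EuclideanSpace ℝ (Fin n) × ℝ) ∈ E := by
    simp [hE, hσ0]
  have hu0 : u < 0 := by
    have := hfE _ h00
    rw [show ((0, 0) : EuclideanSpace ℝ (Fin n) × ℝ) = 0 from rfl, map_zero] at this
    exact this
  have hcone : ∀ q ∈ E, 0 ≤ f q := by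
    intro q hq
    by_contra hneg
    push_neg at hneg
    have hr : (0:ℝ) < (u - 1) / f q := div_pos_of_neg_of_neg (by linarith) hneg
    have hrq : ((u - 1) / f q) • q ∈ E := by
      simp only [hE, Set.mem_setOf_eq] at hq ⊢
      have : σ (((u - 1) / f q) • q.1) = ((u - 1) / f q) * σ q.1 :=
        hhom _ hr.le q.1
      rw [Prod.smul_fst, Prod.smul_snd, this, smul_eq_mul]
      exact mul_le_mul_of_nonneg_left hq hr.le
    have := hfE _ hrq
    rw [map_smul, smul_eq_mul, div_mul_cancel₀ _ (ne_of_lt hneg)] at this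
    linarith
  have hs_nonneg : 0 ≤ s := by
    have := hcone ((0, 1) : EuclideanSpace ℝ (Fin n) × ℝ) (by simp [hE, hσ0])
    exact this
  have hkey : ∀ x : EuclideanSpace ℝ (Fin n), 0 ≤ (∑ i, x i * y i) + σ x * s := by
    intro x
    have := hcone (x, σ x) (by simp [hE])
    rwa [hrep] at this
  have hfdm : f (d, m) = (∑ i, d i * y i) + m * s := hrep d m
  rcases eq_or_lt_of_le hs_nonneg with hs0 | hspos
  · have h1 : 0 ≤ ∑ i, d i * y i := by
      have := hkey d
      rw [← hs0] at this
      simpa using this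
    have : f (d, m) < u := hfu
    rw [hfdm, ← hs0] at this
    simp at this
    linarith
  · set w : EuclideanSpace ℝ (Fin n) := (-s⁻¹) • y with hw_def
    have hwW : ∀ p, (∑ i, w i * p i) ≤ σ p := by
      intro p
      have h1 := hkey p
      have h2 : ∑ i, w i * p i = -s⁻¹ * ∑ i, p i * y i := by
        rw [Finset.mul_sum]
        apply Finset.sum_congr rfl
        intro i _
        simp [hw_def]
        ring
      rw [h2, neg_mul, neg_le]
      calc -(σ p) = (-(σ p) * s) * s⁻¹ := by field_simp
        _ ≤ (∑ i, p i * y i) * s⁻¹ :=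
            mul_le_mul_of_nonneg_right (by linarith) (inv_nonneg.mpr hspos.le)
        _ = s⁻¹ * ∑ i, p i * y i := mul_comm _ _
    have hle := hub w hwW
    have h3 : ∑ i, d i * w i = -s⁻¹ * ∑ i, d i * y i := by
      rw [Finset.mul_sum]
      apply Finset.sum_congr rfl
      intro i _
      simp [hw_def]
      ring
    rw [h3] at hle
    have h4 : -(∑ i, d i * y i) ≤ m * s := by
      have := mul_le_mul_of_nonneg_right hle hspos.le
      calc -(∑ i, d i * y i) = (-s⁻¹ * ∑ i, d i * y i) * s := by
            field_simp
        _ ≤ m * s := this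
    have : f (d, m) < u := hfu
    rw [hfdm] at this
    linarith

set_option maxHeartbeats 1000000 in
/-- At convergence of the split Bregman iteration, the Bregman variable is a discrete
Cahn–Hoffman vector field: if `b` is the closest point of `(1/λ)W` to `d + b`, then
`λb ∈ ∂σ(d)`, and if `d ≠ 0` then `λb` lies on the boundary of the Wulff shape `W`. -/
theorem bregman_variable_cahn_hoffman
    (n : ℕ) (σ : EuclideanSpace ℝ (Fin n) → ℝ)
    (hconv : ConvexOn ℝ Set.univ σ)
    (hhom : ∀ c : ℝ, 0 ≤ c → ∀ p, σ (c • p) = c * σ p)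
    (hpos : ∀ p, p ≠ 0 → 0 < σ p)
    (W : Set (EuclideanSpace ℝ (Fin n)))
    (hW : W = {x | ∀ p, (∑ i, x i * p i) ≤ σ p})
    (lam : ℝ) (hlam : 0 < lam) (d b : EuclideanSpace ℝ (Fin n))
    (hbW : b ∈ lam⁻¹ • W)
    (hbclosest : ∀ y ∈ lam⁻¹ • W, ‖(d + b) - b‖ ≤ ‖(d + b) - y‖) :
    (∀ h, σ (d + h) - σ d ≥ ∑ i, (lam • b) i * h i) ∧
    (d ≠ 0 → lam • b ∈ frontier W) := by
  -- the candidate Cahn–Hoffman vector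
  set c : EuclideanSpace ℝ (Fin n) := lam • b with hc_def
  have hcW : c ∈ W := by
    obtain ⟨w, hwW, hwb⟩ := hbW
    have : c = w := by
      rw [hc_def, ← hwb, smul_smul, mul_inv_cancel₀ hlam.ne', one_smul]
    rwa [this]
  have hc_ineq : ∀ p, (∑ i, c i * p i) ≤ σ p := by
    rw [hW] at hcW; exact hcW
  -- convexity of W and of the scaled Wulff shape
  have hWconv : Convex ℝ W := by
    rw [hW]
    intro x hx z hz a a' ha ha' haa
    intro p
    have hx' := hx p
    have hz' := hz p
    have : ∑ i, (a • x + a' • z) i * p i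
        = a * (∑ i, x i * p i) + a' * (∑ i, z i * p i) := by
      rw [Finset.mul_sum, Finset.mul_sum, ← Finset.sum_add_distrib]
      refine Finset.sum_congr rfl fun i _ => ?_
      simp [PiLp.add_apply, PiLp.smul_apply, smul_eq_mul]
      ring
    rw [this]
    calc a * (∑ i, x i * p i) + a' * (∑ i, z i * p i)
        ≤ a * σ p + a' * σ p := by gcongr
      _ = σ p := by rw [← add_mul, haa, one_mul]
  have hSconv : Convex ℝ (lam⁻¹ • W) := hWconv.smul _
  -- the variational inequality from the closest-point property
  have hvar : ∀ z ∈ lam⁻¹ • W, ⟪d, z - b⟫ ≤ 0 := by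
    intro z hz
    by_contra hcon
    push_neg at hcon
    set v : EuclideanSpace ℝ (Fin n) := z - b with hv_def
    have hvne : v ≠ 0 := by
      intro h0
      rw [h0, inner_zero_right] at hcon
      exact lt_irrefl _ hcon
    have hvnorm : 0 < ‖v‖ ^ 2 := by
      have : 0 < ‖v‖ := norm_pos_iff.mpr hvne
      positivity
    set t : ℝ := min 1 (⟪d, v⟫ / ‖v‖ ^ 2) with ht_def
    have ht0 : 0 < t := lt_min one_pos (div_pos hcon hvnorm)
    have ht1 : t ≤ 1 := min_le_left _ _
    have htv : t * ‖v‖ ^ 2 ≤ ⟪d, v⟫ := by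
      have : t ≤ ⟪d, v⟫ / ‖v‖ ^ 2 := min_le_right _ _
      calc t * ‖v‖ ^ 2 ≤ (⟪d, v⟫ / ‖v‖ ^ 2) * ‖v‖ ^ 2 :=
            mul_le_mul_of_nonneg_right this hvnorm.le
        _ = ⟪d, v⟫ := by field_simp
    have hmem : b + t • v ∈ lam⁻¹ • W := by
      have h := hSconv hbW hz (by linarith : (0:ℝ) ≤ 1 - t) ht0.le (by ring)
      have heq : (1 - t) • b + t • z = b + t • v := by
        rw [hv_def]
        module
      rwa [heq] at h
    have hcl := hbclosest _ hmem
    rw [add_sub_cancel_right] at hcl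
    have heq2 : (d + b) - (b + t • v) = d - t • v := by
      rw [add_comm d b, add_sub_add_left_eq_sub]
    rw [heq2] at hcl
    have hsq : ‖d‖ ^ 2 ≤ ‖d - t • v‖ ^ 2 := by
      have := mul_self_le_mul_self (norm_nonneg d) hcl
      nlinarith [this]
    rw [norm_sub_sq_real, real_inner_smul_right, norm_smul, Real.norm_eq_abs,
      abs_of_pos ht0, mul_pow] at hsq
    nlinarith [htv, hcon, ht0, ht1, hvnorm]
  -- σ d equals the inner product with c
  have hupper : ∀ w ∈ W, (∑ i, d i * w i) ≤ ∑ i, d i * c i := by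
    intro w hw
    have hz : lam⁻¹ • w ∈ lam⁻¹ • W := Set.smul_mem_smul_set hw
    have h1 := hvar _ hz
    rw [inner_sub_right, sub_nonpos, real_inner_smul_right] at h1
    have h2 : ⟪d, w⟫ ≤ lam * ⟪d, b⟫ := by
      calc ⟪d, w⟫ = lam * (lam⁻¹ * ⟪d, w⟫) := by
            field_simp
        _ ≤ lam * ⟪d, b⟫ := by
            exact mul_le_mul_of_nonneg_left h1 hlam.le
    have h3 : lam * ⟪d, b⟫ = ⟪d, c⟫ := by
      rw [hc_def, real_inner_smul_right]
    rw [h3] at h2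
    simpa [PiLp.inner_apply, RCLike.inner_apply, conj_trivial, mul_comm] using h2
  have hle : σ d ≤ ∑ i, d i * c i := by
    apply support_dual_aux n σ hconv hhom
    intro w hw
    exact hupper w (by rw [hW]; exact hw)
  have hge : (∑ i, c i * d i) ≤ σ d := hc_ineq d
  have hsum_comm : (∑ i, d i * c i) = ∑ i, c i * d i :=
    Finset.sum_congr rfl fun i _ => mul_comm _ _
  have hsigma_d : σ d = ∑ i, c i * d i := by
    rw [hsum_comm] at hle
    linarith
  constructor
  · -- subgradient inequality
    intro h
    have h1 : (∑ i, c i * (d + h) i) ≤ σ (d + h) := hc_ineq (d + h)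
    have h2 : (∑ i, c i * (d + h) i) = (∑ i, c i * d i) + ∑ i, c i * h i := by
      rw [← Finset.sum_add_distrib]
      refine Finset.sum_congr rfl fun i _ => ?_
      simp [PiLp.add_apply]
      ring
    have h3 : (∑ i, (lam • b) i * h i) = ∑ i, c i * h i := rfl
    rw [h3]
    rw [h2] at h1
    linarith [hsigma_d]
  · -- boundary statement
    intro hd
    have hWclosed : IsClosed W := by
      rw [hW]
      have : {x : EuclideanSpace ℝ (Fin n) | ∀ p, (∑ i, x i * p i) ≤ σ p}
          = ⋂ p, {x : EuclideanSpace ℝ (Fin n) | (∑ i, x i * p i) ≤ σ p} := by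
        ext x; simp [Set.mem_iInter]
      rw [this]
      refine isClosed_iInter fun p => isClosed_le ?_ continuous_const
      exact continuous_finset_sum _ fun i _ =>
        ((continuous_apply i).comp (PiLp.continuous_ofLp 2 _)).mul continuous_const
    rw [frontier, hWclosed.closure_eq]
    refine ⟨hcW, fun hint => ?_⟩
    obtain ⟨ε, hε, hball⟩ := Metric.isOpen_iff.mp isOpen_interior c hint
    have hdnorm : 0 < ‖d‖ := norm_pos_iff.mpr hd
    set δ : ℝ := ε / (2 * ‖d‖) with hδ_def
    have hδpos : 0 < δ := div_pos hε (by positivity)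
    have hxball : c + δ • d ∈ Metric.ball c ε := by
      rw [Metric.mem_ball, dist_eq_norm, add_sub_cancel_left, norm_smul,
        Real.norm_eq_abs, abs_of_pos hδpos]
      rw [hδ_def]
      rw [div_mul_eq_mul_div, mul_comm 2 ‖d‖, ← div_div, mul_div_assoc,
        div_self hdnorm.ne', mul_one]
      linarith
    have hxW : c + δ • d ∈ W := interior_subset (hball hxball)
    rw [hW] at hxW
    have h1 := hxW d
    have h2 : (∑ i, (c + δ • d) i * d i)
        = (∑ i, c i * d i) + δ * ∑ i, d i * d i := by
      rw [Finset.mul_sum, ← Finset.sum_add_distrib]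
      refine Finset.sum_congr rfl fun i _ => ?_
      simp [PiLp.add_apply, PiLp.smul_apply, smul_eq_mul]
      ring
    rw [h2, ← hsigma_d] at h1
    have hdd : 0 < ∑ i, d i * d i := by
      have : ∃ j, d j ≠ 0 := by
        by_contra hcon
        push_neg at hcon
        exact hd (by ext i; simpa using hcon i)
      obtain ⟨j, hj⟩ := this
      refine Finset.sum_pos' (fun i _ => mul_self_nonneg _) ⟨j, Finset.mem_univ j, ?_⟩
      exact mul_self_pos.mpr hj
    nlinarith
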